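/- The map from [0, ∞) to C(ℝ, ℂ) with the compact-open topology given by y ↦ (x ↦ cos(2πyx)) is a topological embedding (a homeomorphism onto its range). Consequently, COS(ℝ) equipped with the topology of uniform convergence on compact sets is homeomorphic to [0, ∞). -/

import Mathlib

open Real Topology

/-- The cosine class `COS(G)`: nonzero bounded continuous `φ : G → ℂ` satisfying the
d'Alembert equation `φ(x) φ(y) = (φ(x+y) + φ(x-y))/2`. -/
def CosClass (G : Type*) [AddCommGroup G] [TopologicalSpace G] : Set (G → ℂ) :=
  {φ | Continuous φ ∧ (∃ C, ∀ x, ‖φ x‖ ≤ C) ∧ φ ≠ 0 ∧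
    ∀ x y, φ x * φ y = (φ (x + y) + φ (x - y)) / 2}

/-- The continuous map `x ↦ cos(2πyx)`, viewed as an element of `C(ℝ, ℂ)`. -/
noncomputable def cosCM (y : ℝ) : C(ℝ, ℂ) :=
  ⟨fun x => (Real.cos (2 * π * y * x) : ℂ), by fun_prop⟩

section helpers
open intervalIntegral


lemma cos_dal (p q : ℝ) : (Real.cos p : ℂ) * (Real.cos q : ℂ)
    = ((Real.cos (p+q) : ℂ) + (Real.cos (p-q) : ℂ)) / 2 := by
  rw [← Complex.ofReal_mul, ← Complex.ofReal_add]
  rw [show ((2:ℂ) = ((2:ℝ):ℂ)) by norm_num, ← Complex.ofReal_div]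
  congr 1
  rw [Real.cos_add, Real.cos_sub]; ring

lemma cosCM_inj {y₁ y₂ : ℝ} (h₁ : 0 ≤ y₁) (h₂ : 0 ≤ y₂)
    (h : ∀ x, Real.cos (2*π*y₁*x) = Real.cos (2*π*y₂*x)) : y₁ = y₂ := by
  wlog hle : y₁ ≤ y₂ generalizing y₁ y₂
  · exact (this h₂ h₁ (fun x => (h x).symm) (le_of_not_ge hle)).symm
  rcases eq_or_lt_of_le hle with heq | hlt
  · exact heq
  have hy2 : 0 < y₂ := lt_of_le_of_lt h₁ hlt
  have hx := h (1/(2*y₂))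
  have e2 : 2*π*y₂*(1/(2*y₂)) = π := by field_simp
  have e1 : 2*π*y₁*(1/(2*y₂)) = π*(y₁/y₂) := by field_simp
  rw [e1, e2, Real.cos_pi] at hx
  have hlt' : π*(y₁/y₂) < π := by
    have : y₁/y₂ < 1 := (div_lt_one hy2).2 hlt
    nlinarith [Real.pi_pos]
  have h0 : 0 ≤ π*(y₁/y₂) := by positivity
  have : Real.cos (π*(y₁/y₂)) > -1 := by
    have := Real.strictAntiOn_cos ⟨h0, hlt'.le⟩
      ⟨by linarith [Real.pi_pos], le_refl π⟩ hlt'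
    rw [Real.cos_pi] at this; linarith
  linarith [this, hx.ge, hx.le]


lemma gap_ge {u v θ : ℝ} (hu : 0 ≤ u) (hv : 0 < v) (hθ : π*(u/v) ≤ θ) (hθπ : θ ≤ π) :
    Real.cos θ + 1 ≤ |Real.cos (2*π*u*(1/(2*v))) - Real.cos (2*π*v*(1/(2*v)))| := by
  have e2 : 2*π*v*(1/(2*v)) = π := by field_simp
  have e1 : 2*π*u*(1/(2*v)) = π*(u/v) := by field_simp
  rw [e1, e2, Real.cos_pi]
  have h0 : 0 ≤ π*(u/v) := by positivity
  have hle : Real.cos θ ≤ Real.cos (π*(u/v)) :=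
    Real.cos_le_cos_of_nonneg_of_le_pi h0 hθπ hθ
  have := Real.neg_one_le_cos (π*(u/v))
  rw [abs_of_nonneg (by linarith)]
  linarith

lemma keyA {y₀ : ℝ} (h₀ : 0 ≤ y₀) {ε : ℝ} (hε : 0 < ε) :
    ∃ R > (0:ℝ), ∃ δ > (0:ℝ), ∀ y : ℝ, 0 ≤ y →
      (∀ x ∈ Set.Icc (0:ℝ) R,
        dist ((Real.cos (2*π*y*x) : ℂ)) ((Real.cos (2*π*y₀*x) : ℂ)) < δ) →
      |y - y₀| < ε := by
  have hπ := Real.pi_pos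
  set θ₁ : ℝ := π*(y₀/(y₀+ε)) with hθ₁def
  have hθ₁π : θ₁ < π := by
    have : y₀/(y₀+ε) < 1 := (div_lt_one (by linarith)).2 (by linarith)
    nlinarith
  have hθ₁0 : 0 ≤ θ₁ := by positivity
  have hδ₁ : 0 < (Real.cos θ₁ + 1)/2 := by
    have := Real.strictAntiOn_cos ⟨hθ₁0, hθ₁π.le⟩ ⟨hπ.le, le_refl π⟩ hθ₁π
    rw [Real.cos_pi] at this; linarith
  set δ₂ : ℝ := if ε ≤ y₀ then (Real.cos (π*((y₀-ε)/y₀)) + 1)/2 else 1 with hδ₂def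
  have hδ₂pos : 0 < δ₂ := by
    rw [hδ₂def]; split_ifs with hc
    · have hy₀ : 0 < y₀ := lt_of_lt_of_le hε hc
      have hlt : π*((y₀-ε)/y₀) < π := by
        have : (y₀-ε)/y₀ < 1 := (div_lt_one hy₀).2 (by linarith)
        nlinarith
      have h0 : 0 ≤ π*((y₀-ε)/y₀) := mul_nonneg Real.pi_pos.le (div_nonneg (by linarith) hy₀.le)
      have := Real.strictAntiOn_cos ⟨h0, hlt.le⟩ ⟨hπ.le, le_refl π⟩ hlt
      rw [Real.cos_pi] at this; linarith
    · norm_num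
  refine ⟨1/(2*(y₀+ε)) + 1/(2*y₀) + 1, by positivity,
    min ((Real.cos θ₁ + 1)/2) δ₂, lt_min hδ₁ hδ₂pos, fun y hy hsup => ?_⟩
  by_contra habs
  push_neg at habs
  rcases abs_cases (y - y₀) with ⟨he, _⟩ | ⟨he, _⟩
  · -- y ≥ y₀ + ε
    have hyy : y₀ + ε ≤ y := by rw [he] at habs; linarith
    have hyp : 0 < y := by linarith
    have hx : (1/(2*y) : ℝ) ∈ Set.Icc (0:ℝ) (1/(2*(y₀+ε)) + 1/(2*y₀) + 1) := by
      constructor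
      · positivity
      · have : 1/(2*y) ≤ 1/(2*(y₀+ε)) := by
          apply one_div_le_one_div_of_le (by linarith) (by linarith)
        have h2 : (0:ℝ) ≤ 1/(2*y₀) := by positivity
        linarith
    have hd := hsup _ hx
    rw [Complex.isometry_ofReal.dist_eq, Real.dist_eq] at hd
    have hgap := gap_ge h₀ hyp (θ := θ₁)
      (by
        rw [hθ₁def]
        have : y₀/y ≤ y₀/(y₀+ε) :=
          div_le_div_of_nonneg_left h₀ (by linarith) hyy
        nlinarith)
      hθ₁π.le
    have : min ((Real.cos θ₁ + 1)/2) δ₂ ≤ (Real.cos θ₁ + 1)/2 := min_le_left _ _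
    rw [abs_sub_comm] at hgap
    linarith [hgap, hd]
  · -- y ≤ y₀ - ε
    have hyy : y ≤ y₀ - ε := by rw [he] at habs; linarith
    have hy₀ε : ε ≤ y₀ := by linarith
    have hy₀p : 0 < y₀ := lt_of_lt_of_le hε hy₀ε
    have hx : (1/(2*y₀) : ℝ) ∈ Set.Icc (0:ℝ) (1/(2*(y₀+ε)) + 1/(2*y₀) + 1) := by
      constructor
      · positivity
      · have h2 : (0:ℝ) ≤ 1/(2*(y₀+ε)) := by positivity
        linarith
    have hd := hsup _ hx
    rw [Complex.isometry_ofReal.dist_eq, Real.dist_eq] at hd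
    have hgap := gap_ge hy hy₀p (θ := π*((y₀-ε)/y₀))
      (by
        have : y/y₀ ≤ (y₀-ε)/y₀ := (div_le_div_iff_of_pos_right hy₀p).2 hyy
        nlinarith)
      (by
        have : (y₀-ε)/y₀ ≤ 1 := (div_le_one hy₀p).2 (by linarith)
        nlinarith)
    have hmin : min ((Real.cos θ₁ + 1)/2) δ₂ ≤ δ₂ := min_le_right _ _
    have hδ₂eq : δ₂ = (Real.cos (π*((y₀-ε)/y₀)) + 1)/2 := by rw [hδ₂def, if_pos hy₀ε]
    linarith [hgap, hd, hmin, hδ₂eq ▸ hmin]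


lemma dalembert_classify {φ : ℝ → ℂ} (hc : Continuous φ) {C : ℝ} (hb : ∀ x, ‖φ x‖ ≤ C)
    (h0 : φ ≠ 0) (hFE : ∀ x y, φ x * φ y = (φ (x+y) + φ (x-y))/2) :
    ∃ y : ℝ, 0 ≤ y ∧ ∀ x, φ x = (Real.cos (2*π*y*x) : ℂ) := by
  -- φ 0 = 1
  have hφ0 : φ 0 = 1 := by
    by_contra hne
    apply h0
    funext x
    have h := hFE x 0
    simp only [add_zero, sub_zero] at h
    have : φ x * (φ 0 - 1) = 0 := by rw [mul_sub]; rw [h]; ring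
    rcases mul_eq_zero.1 this with h' | h'
    · simpa using h'
    · exact absurd (by linear_combination h') hne
  -- even
  have hEven : ∀ x, φ (-x) = φ x := by
    intro x
    have h := hFE 0 x
    rw [hφ0, one_mul, zero_add, zero_sub] at h
    linear_combination -2*h
  -- a small interval with nonzero integral
  obtain ⟨a, ha, hcval⟩ : ∃ a > (0:ℝ), ∀ t ∈ Set.Icc 0 a, ‖φ t - 1‖ ≤ 1/2 := by
    have := Metric.continuousAt_iff.1 (hc.continuousAt (x := 0)) (1/2) (by norm_num)
    obtain ⟨ε, hε, hd⟩ := this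
    refine ⟨ε/2, by positivity, fun t ht => ?_⟩
    have : dist t 0 < ε := by
      rw [Real.dist_eq, sub_zero, abs_of_nonneg ht.1]; linarith [ht.2]
    have := hd this
    rw [hφ0, dist_eq_norm] at this
    exact this.le
  set c : ℂ := ∫ t in (0:ℝ)..a, φ t with hcdef
  have hcne : c ≠ 0 := by
    intro hcz
    have hint1 : (∫ t in (0:ℝ)..a, (1:ℂ)) = (a:ℂ) := by simp
    have hsub : (∫ t in (0:ℝ)..a, (φ t - 1)) = c - a := by
      rw [intervalIntegral.integral_sub (hc.intervalIntegrable _ _)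
        (intervalIntegrable_const), hint1]
    have hnorm : ‖∫ t in (0:ℝ)..a, (φ t - 1)‖ ≤ (1/2) * |a - 0| := by
      apply intervalIntegral.norm_integral_le_of_norm_le_const
      intro t ht
      rw [Set.uIoc_of_le ha.le] at ht
      exact hcval t ⟨ht.1.le, ht.2⟩
    rw [hsub, hcz, zero_sub, norm_neg, sub_zero] at hnorm
    have h1 : ‖(a:ℂ)‖ = a := by rw [Complex.norm_real, Real.norm_eq_abs, abs_of_pos ha]
    rw [h1, abs_of_pos ha] at hnorm
    linarith
  -- key integral identity
  have hKey : ∀ x, φ x * c = (∫ t in (x-a)..(x+a), φ t) / 2 := by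
    intro x
    have h1 : φ x * c = ∫ y in (0:ℝ)..a, φ x * φ y := by
      rw [intervalIntegral.integral_const_mul]
    have h2 : (∫ y in (0:ℝ)..a, φ x * φ y)
        = ∫ y in (0:ℝ)..a, (φ (x+y) + φ (x-y))/2 := by
      apply intervalIntegral.integral_congr
      intro y _
      exact hFE x y
    have hint_add : IntervalIntegrable (fun y => φ (x+y)) MeasureTheory.volume 0 a :=
      (hc.comp (by continuity)).intervalIntegrable _ _
    have hint_sub : IntervalIntegrable (fun y => φ (x-y)) MeasureTheory.volume 0 a :=
      (hc.comp (by continuity)).intervalIntegrable _ _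
    have h3 : (∫ y in (0:ℝ)..a, (φ (x+y) + φ (x-y))/2)
        = ((∫ y in (0:ℝ)..a, φ (x+y)) + ∫ y in (0:ℝ)..a, φ (x-y)) / 2 := by
      rw [intervalIntegral.integral_div, intervalIntegral.integral_add hint_add hint_sub]
    have h4 : (∫ y in (0:ℝ)..a, φ (x+y)) = ∫ t in x..(x+a), φ t := by
      simpa using intervalIntegral.integral_comp_add_left (a := (0:ℝ)) (b := a) φ x
    have h5 : (∫ y in (0:ℝ)..a, φ (x-y)) = ∫ t in (x-a)..x, φ t := by
      simpa using intervalIntegral.integral_comp_sub_left (a := (0:ℝ)) (b := a) φ x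
    have h6 : (∫ t in (x-a)..x, φ t) + (∫ t in x..(x+a), φ t)
        = ∫ t in (x-a)..(x+a), φ t :=
      intervalIntegral.integral_add_adjacent_intervals
        (hc.intervalIntegrable _ _) (hc.intervalIntegrable _ _)
    rw [h1, h2, h3, h4, h5]
    rw [← h6]; ring
  -- antiderivative
  set F : ℝ → ℂ := fun t => ∫ s in (0:ℝ)..t, φ s with hFdef
  have hF : ∀ t, HasDerivAt F (φ t) t := fun t => (hc.integral_hasStrictDerivAt 0 t).hasDerivAt
  have hcne2 : (2:ℂ)*c ≠ 0 := by
    simp only [ne_eq, mul_eq_zero]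
    push_neg
    exact ⟨two_ne_zero, hcne⟩
  have hφeq : ∀ x, φ x = (F (x+a) - F (x-a)) / (2*c) := by
    intro x
    have hsplit : (∫ t in (0:ℝ)..(x-a), φ t) + (∫ t in (x-a)..(x+a), φ t)
        = ∫ t in (0:ℝ)..(x+a), φ t :=
      intervalIntegral.integral_add_adjacent_intervals
        (hc.intervalIntegrable _ _) (hc.intervalIntegrable _ _)
    have hI : (∫ t in (x-a)..(x+a), φ t) = F (x+a) - F (x-a) := by
      rw [hFdef]; simp only []
      linear_combination hsplit
    have hk := hKey x
    rw [hI] at hk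
    field_simp
    linear_combination 2 * hk
  set ψ : ℝ → ℂ := fun x => (φ (x+a) - φ (x-a)) / (2*c) with hψdef
  have hDφ : ∀ x, HasDerivAt φ (ψ x) x := by
    intro x
    have h1 : HasDerivAt (fun x => F (x+a)) (φ (x+a)) x := by
      simpa [Function.comp_def] using (hF (x+a)).scomp x ((hasDerivAt_id x).add_const a)
    have h2 : HasDerivAt (fun x => F (x-a)) (φ (x-a)) x := by
      simpa [Function.comp_def] using (hF (x-a)).scomp x ((hasDerivAt_id x).sub_const a)
    have h3 : HasDerivAt (fun x => (F (x+a) - F (x-a)) / (2*c)) (ψ x) x :=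
      (h1.sub h2).div_const (2*c)
    exact h3.congr_of_eventuallyEq (Filter.Eventually.of_forall hφeq)
  set χ : ℝ → ℂ := fun x => (ψ (x+a) - ψ (x-a)) / (2*c) with hχdef
  have hDψ : ∀ x, HasDerivAt ψ (χ x) x := by
    intro x
    have h1 : HasDerivAt (fun x => φ (x+a)) (ψ (x+a)) x := by
      simpa [Function.comp_def] using (hDφ (x+a)).scomp x ((hasDerivAt_id x).add_const a)
    have h2 : HasDerivAt (fun x => φ (x-a)) (ψ (x-a)) x := by
      simpa [Function.comp_def] using (hDφ (x-a)).scomp x ((hasDerivAt_id x).sub_const a)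
    exact (h1.sub h2).div_const (2*c)
  have hψ0 : ψ 0 = 0 := by
    rw [hψdef]
    simp only [zero_add, zero_sub, hEven a, sub_self, zero_div]
  set k : ℂ := χ 0 with hkdef
  have hODE : ∀ x, χ x = k * φ x := by
    intro x
    have lev1 : ∀ y, φ x * ψ y = (ψ (x+y) - ψ (x-y)) / 2 := by
      intro y
      have hg : HasDerivAt (fun y => φ x * φ y) (φ x * ψ y) y := (hDφ y).const_mul (φ x)
      have h1 : HasDerivAt (fun y => φ (x+y)) (ψ (x+y)) y := by
        simpa [Function.comp_def] using (hDφ (x+y)).scomp y ((hasDerivAt_id y).const_add x)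
      have h2 : HasDerivAt (fun y => φ (x-y)) (-ψ (x-y)) y := by
        simpa [Function.comp_def] using (hDφ (x-y)).scomp y ((hasDerivAt_id y).const_sub x)
      have hh : HasDerivAt (fun y => (φ (x+y) + φ (x-y))/2) ((ψ (x+y) - ψ (x-y))/2) y := by
        have := (h1.add h2).div_const 2
        simpa [sub_eq_add_neg] using this
      have hgh : (fun y => φ x * φ y) = (fun y => (φ (x+y) + φ (x-y))/2) :=
        funext fun y => hFE x y
      have hg' : HasDerivAt (fun y => (φ (x+y) + φ (x-y))/2) (φ x * ψ y) y := hgh ▸ hg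
      exact hg'.unique hh
    have lev2 : HasDerivAt (fun y => φ x * ψ y) (φ x * χ 0) 0 := (hDψ 0).const_mul (φ x)
    have h1 : HasDerivAt (fun y => ψ (x+y)) (χ (x+0)) 0 := by
      simpa [Function.comp_def] using (hDψ (x+0)).scomp 0 ((hasDerivAt_id 0).const_add x)
    have h2 : HasDerivAt (fun y => ψ (x-y)) (-χ (x-0)) 0 := by
      simpa [Function.comp_def] using (hDψ (x-0)).scomp 0 ((hasDerivAt_id 0).const_sub x)
    have lev2' : HasDerivAt (fun y => (ψ (x+y) - ψ (x-y))/2) ((χ (x+0) + χ (x-0))/2) 0 := by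
      have := (h1.sub h2).div_const 2
      simpa [sub_neg_eq_add] using this
    have heq2 : (fun y => φ x * ψ y) = fun y => (ψ (x+y) - ψ (x-y))/2 := funext lev1
    have lev2'' : HasDerivAt (fun y => (ψ (x+y) - ψ (x-y))/2) (φ x * χ 0) 0 := heq2 ▸ lev2
    have hfin := lev2''.unique lev2'
    rw [add_zero, sub_zero] at hfin
    rw [hkdef]
    linear_combination -hfin
  by_cases hk : k = 0
  · -- φ ≡ 1
    have hψz : ∀ x, ψ x = 0 := by
      have hdiff : Differentiable ℝ ψ := fun x => (hDψ x).differentiableAt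
      have hderiv : ∀ x, deriv ψ x = 0 := fun x => by
        rw [(hDψ x).deriv, hODE x, hk, zero_mul]
      intro x
      rw [is_const_of_deriv_eq_zero hdiff hderiv x 0, hψ0]
    have hφ1 : ∀ x, φ x = 1 := by
      have hdiff : Differentiable ℝ φ := fun x => (hDφ x).differentiableAt
      have hderiv : ∀ x, deriv φ x = 0 := fun x => by rw [(hDφ x).deriv, hψz]
      intro x
      rw [is_const_of_deriv_eq_zero hdiff hderiv x 0, hφ0]
    refine ⟨0, le_refl 0, fun x => ?_⟩
    rw [hφ1 x]
    norm_num
  · obtain ⟨ω, hω⟩ : ∃ z : ℂ, z^2 = -k := IsAlgClosed.exists_pow_nat_eq (-k) two_pos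
    have hωne : ω ≠ 0 := by
      intro h
      rw [h] at hω
      apply hk
      have : -k = 0 := by rw [← hω]; ring
      linear_combination -this
    set c₀ : ℝ → ℂ := fun x => Complex.cos (ω * x) with hc₀def
    set s₀ : ℝ → ℂ := fun x => Complex.sin (ω * x) with hs₀def
    have hox : ∀ x : ℝ, HasDerivAt (fun x : ℝ => ω * (x:ℂ)) ω x := by
      intro x
      have h1 : HasDerivAt (fun x : ℝ => (x:ℂ)) 1 x := by
        simpa using (hasDerivAt_id x).ofReal_comp
      simpa using h1.const_mul ω
    have hDc₀ : ∀ x, HasDerivAt c₀ (-(ω * s₀ x)) x := by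
      intro x
      have := HasDerivAt.scomp (𝕜 := ℝ) x (Complex.hasDerivAt_cos (ω * x)) (hox x)
      simpa [hc₀def, hs₀def, smul_eq_mul, mul_comm, Function.comp_def] using this
    have hDs₀ : ∀ x, HasDerivAt s₀ (ω * c₀ x) x := by
      intro x
      have := HasDerivAt.scomp (𝕜 := ℝ) x (Complex.hasDerivAt_sin (ω * x)) (hox x)
      simpa [hs₀def, hc₀def, smul_eq_mul, mul_comm, Function.comp_def] using this
    set u : ℝ → ℂ := fun x => φ x - c₀ x with hudef
    set u' : ℝ → ℂ := fun x => ψ x + ω * s₀ x with hu'def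
    have hDu : ∀ x, HasDerivAt u (u' x) x := by
      intro x
      have := (hDφ x).sub (hDc₀ x)
      simpa [hudef, hu'def, sub_neg_eq_add, Pi.sub_def] using this
    have hDu' : ∀ x, HasDerivAt u' (k * u x) x := by
      intro x
      have h := (hDψ x).add ((hDs₀ x).const_mul ω)
      have e : χ x + ω * (ω * c₀ x) = k * u x := by
        rw [hODE x, hudef]
        simp only []
        linear_combination (c₀ x) * hω
      exact e ▸ h
    have hW1 : ∀ x, u' x * c₀ x - u x * (-(ω * s₀ x)) = 0 := by
      have hDW : ∀ t, HasDerivAt (fun x => u' x * c₀ x - u x * (-(ω * s₀ x))) 0 t := by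
        intro t
        have hA := (hDu' t).mul (hDc₀ t)
        have hB := (hDu t).mul (((hDs₀ t).const_mul ω).neg)
        have h := hA.sub hB
        have hval : k * u t * c₀ t + u' t * (-(ω * s₀ t))
            - (u' t * (-(ω * s₀ t)) + u t * (-(ω * (ω * c₀ t)))) = 0 := by
          linear_combination (u t * c₀ t) * hω
        exact hval ▸ h
      intro x
      have hdiff : Differentiable ℝ (fun x => u' x * c₀ x - u x * (-(ω * s₀ x))) :=
        fun t => (hDW t).differentiableAt
      have hderiv : ∀ t, deriv (fun x => u' x * c₀ x - u x * (-(ω * s₀ x))) t = 0 :=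
        fun t => (hDW t).deriv
      have hconst := is_const_of_deriv_eq_zero hdiff hderiv x 0
      have hu0 : u 0 = 0 := by
        rw [hudef]; simp only [hc₀def]
        rw [hφ0]
        norm_num
      have hu'0 : u' 0 = 0 := by
        rw [hu'def]; simp only [hs₀def]
        rw [hψ0]
        norm_num
      rw [hconst, hu0, hu'0]
      ring
    have hW2 : ∀ x, u' x * s₀ x - u x * (ω * c₀ x) = 0 := by
      have hDW : ∀ t, HasDerivAt (fun x => u' x * s₀ x - u x * (ω * c₀ x)) 0 t := by
        intro t
        have hA := (hDu' t).mul (hDs₀ t)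
        have hB := (hDu t).mul ((hDc₀ t).const_mul ω)
        have h := hA.sub hB
        have hval : k * u t * s₀ t + u' t * (ω * c₀ t)
            - (u' t * (ω * c₀ t) + u t * (ω * -(ω * s₀ t))) = 0 := by
          linear_combination (u t * s₀ t) * hω
        exact hval ▸ h
      intro x
      have hdiff : Differentiable ℝ (fun x => u' x * s₀ x - u x * (ω * c₀ x)) :=
        fun t => (hDW t).differentiableAt
      have hderiv : ∀ t, deriv (fun x => u' x * s₀ x - u x * (ω * c₀ x)) t = 0 :=
        fun t => (hDW t).deriv
      have hconst := is_const_of_deriv_eq_zero hdiff hderiv x 0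
      have hu0 : u 0 = 0 := by
        rw [hudef]; simp only [hc₀def]
        rw [hφ0]
        norm_num
      have hu'0 : u' 0 = 0 := by
        rw [hu'def]; simp only [hs₀def]
        rw [hψ0]
        norm_num
      rw [hconst, hu0, hu'0]
      ring
    have hφcos : ∀ x, φ x = Complex.cos (ω * x) := by
      intro x
      have hpyth := Complex.sin_sq_add_cos_sq (ω * (x:ℂ))
      have huz : u x * ω = 0 := by
        linear_combination (s₀ x) * (hW1 x) - (c₀ x) * (hW2 x) - (u x * ω) * hpyth
      have : u x = 0 := by
        rcases mul_eq_zero.1 huz with h | h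
        · exact h
        · exact absurd h hωne
      have := this
      rw [hudef] at this
      simp only [hc₀def] at this
      linear_combination this
    -- boundedness forces ω real
    have hC1 : 1 ≤ C := by
      have := hb 0
      rwa [hφ0, norm_one] at this
    have him : ω.im = 0 := by
      by_contra hbne
      set L : ℝ := Real.log (2*C+2) with hLdef
      have hLpos : (0:ℝ) < 2*C+2 := by linarith
      have hL0 : 0 ≤ L := Real.log_nonneg (by linarith)
      set x₀ : ℝ := L / ω.im with hx₀def
      have hzim : (ω * (x₀:ℂ)).im = L := by
        rw [Complex.mul_im]
        simp only [Complex.ofReal_re, Complex.ofReal_im, mul_zero, add_zero, zero_add]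
        rw [hx₀def]
        field_simp
      -- lower bound for ‖cos z‖
      set z : ℂ := ω * (x₀:ℂ) with hzdef
      have hcosz : Complex.cos z = (Complex.exp (z*Complex.I) + Complex.exp (-z*Complex.I))/2 :=
        rfl
      have hnorm1 : ‖Complex.exp (-z*Complex.I)‖ = Real.exp L := by
        rw [Complex.norm_exp]
        congr 1
        rw [neg_mul, Complex.neg_re, Complex.mul_I_re, hzim, neg_neg]
      have hnorm2 : ‖Complex.exp (z*Complex.I)‖ = Real.exp (-L) := by
        rw [Complex.norm_exp]
        congr 1
        rw [Complex.mul_I_re, hzim]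
      have hlow : (Real.exp L - Real.exp (-L))/2 ≤ ‖Complex.cos z‖ := by
        rw [hcosz, norm_div]
        have h1 : ‖Complex.exp (-z*Complex.I)‖ - ‖Complex.exp (z*Complex.I)‖
            ≤ ‖Complex.exp (z*Complex.I) + Complex.exp (-z*Complex.I)‖ := by
          have h := norm_sub_norm_le (Complex.exp (-z*Complex.I))
            (-(Complex.exp (z*Complex.I)))
          rw [norm_neg, sub_neg_eq_add, add_comm] at h
          exact h
        rw [hnorm1, hnorm2] at h1
        have h2 : ‖(2:ℂ)‖ = 2 := by norm_num
        rw [h2]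
        linarith
      have hexpL : Real.exp L = 2*C+2 := Real.exp_log hLpos
      rw [hexpL] at hlow
      have hexpnL : Real.exp (-L) ≤ 1 := by
        rw [Real.exp_le_one_iff]
        linarith
      have hbx := hb x₀
      rw [hφcos x₀] at hbx
      have hbx' : ‖Complex.cos z‖ ≤ C := hbx
      linarith
    -- conclude
    have hωr : ((ω.re : ℝ) : ℂ) = ω := by
      apply Complex.ext
      · simp
      · simp [him]
    refine ⟨(abs ω.re) / (2*π), by positivity, fun x => ?_⟩
    have h2π : 2*π*((abs ω.re)/(2*π))*x = (abs ω.re)*x := by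
      have := Real.pi_ne_zero
      field_simp
    rw [h2π, hφcos x, ← hωr, ← Complex.ofReal_mul, ← Complex.ofReal_cos]
    congr 1
    simp only [Complex.ofReal_re]
    rcases abs_cases ω.re with ⟨h,_⟩ | ⟨h,_⟩
    · rw [h]
    · rw [h, neg_mul, Real.cos_neg]

lemma cosCM_cont : Continuous (fun y : {y : ℝ // 0 ≤ y} => cosCM (y : ℝ)) := by
  let H : C({y : ℝ // 0 ≤ y} × ℝ, ℂ) :=
    ⟨fun p => (Real.cos (2 * π * p.1 * p.2) : ℂ), by fun_prop⟩
  have : (fun y : {y : ℝ // 0 ≤ y} => cosCM (y : ℝ)) = ⇑(ContinuousMap.curry H) := by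
    funext y; ext x; rfl
  rw [this]
  exact (ContinuousMap.curry H).continuous

lemma cosCM_emb : IsEmbedding (fun y : {y : ℝ // 0 ≤ y} => cosCM (y : ℝ)) := by
  constructor
  · refine isInducing_iff_nhds.2 fun a => le_antisymm (cosCM_cont.tendsto a).le_comap ?_
    intro s hs
    rcases Metric.mem_nhds_iff.1 hs with ⟨ε, hε, hball⟩
    rcases keyA a.2 hε with ⟨R, hR, δ, hδ, hkey⟩
    rw [Filter.mem_comap]
    have hKc : IsCompact (Set.Icc (0:ℝ) R) := isCompact_Icc
    have : CompactSpace (Set.Icc (0:ℝ) R) := isCompact_iff_compactSpace.mp hKc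
    refine ⟨(ContinuousMap.restrict (Set.Icc (0:ℝ) R)) ⁻¹'
      (Metric.ball ((cosCM (a:ℝ)).restrict (Set.Icc (0:ℝ) R)) δ), ?_, ?_⟩
    · exact (ContinuousMap.continuous_restrict _).continuousAt.preimage_mem_nhds
        (Metric.isOpen_ball.mem_nhds (by simp [hδ]))
    · intro y hy
      apply hball
      rw [Metric.mem_ball, Subtype.dist_eq, Real.dist_eq]
      refine hkey y y.2 fun x hx => ?_
      calc dist ((Real.cos (2*π*y*x) : ℂ)) ((Real.cos (2*π*(a:ℝ)*x) : ℂ))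
          = dist (((cosCM (y:ℝ)).restrict (Set.Icc (0:ℝ) R)) ⟨x, hx⟩)
            (((cosCM (a:ℝ)).restrict (Set.Icc (0:ℝ) R)) ⟨x, hx⟩) := rfl
        _ ≤ dist ((cosCM (y:ℝ)).restrict (Set.Icc (0:ℝ) R))
            ((cosCM (a:ℝ)).restrict (Set.Icc (0:ℝ) R)) :=
              ContinuousMap.dist_apply_le_dist _
        _ < δ := hy
  · intro y₁ y₂ h
    ext
    refine cosCM_inj y₁.2 y₂.2 fun x => ?_
    have h2 : ((Real.cos (2*π*y₁*x) : ℝ) : ℂ) = ((Real.cos (2*π*y₂*x) : ℝ) : ℂ) :=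
      DFunLike.congr_fun h x
    exact_mod_cast h2


lemma cosCM_mem (y : ℝ) : ⇑(cosCM y) ∈ CosClass ℝ := by
  refine ⟨(cosCM y).continuous, ⟨1, fun x => ?_⟩, ?_, ?_⟩
  · show ‖((Real.cos (2*π*y*x) : ℝ) : ℂ)‖ ≤ 1
    rw [Complex.norm_real, Real.norm_eq_abs]
    exact Real.abs_cos_le_one _
  · intro hzero
    have h := congrFun hzero 0
    have : ((Real.cos (2*π*y*0) : ℝ) : ℂ) = 0 := h
    rw [mul_zero, Real.cos_zero] at this
    simp at this
  · intro x₁ x₂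
    have h := cos_dal (2*π*y*x₁) (2*π*y*x₂)
    rw [show 2*π*y*x₁ + 2*π*y*x₂ = 2*π*y*(x₁+x₂) by ring,
        show 2*π*y*x₁ - 2*π*y*x₂ = 2*π*y*(x₁-x₂) by ring] at h
    exact h

lemma cosCM_range_eq : Set.range (fun y : {y : ℝ // 0 ≤ y} => cosCM (y : ℝ))
    = {φ : C(ℝ, ℂ) | ⇑φ ∈ CosClass ℝ} := by
  ext φ
  constructor
  · rintro ⟨y, rfl⟩
    exact cosCM_mem y
  · rintro ⟨hc, ⟨C, hb⟩, h0, hFE⟩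
    obtain ⟨y, hy, hcos⟩ := dalembert_classify hc hb h0 hFE
    refine ⟨⟨y, hy⟩, ?_⟩
    ext x
    exact (hcos x).symm

end helpers

/-- The map `y ↦ (x ↦ cos(2πyx))` from `[0, ∞)` to `C(ℝ, ℂ)` with the
compact-open topology is a topological embedding with range `COS(ℝ)`; consequently
`COS(ℝ)` with the topology of uniform convergence on compacta is homeomorphic to
`[0, ∞)`. -/
theorem cosClass_real_homeomorph :
    IsEmbedding (fun y : {y : ℝ // 0 ≤ y} => cosCM (y : ℝ)) ∧
    Set.range (fun y : {y : ℝ // 0 ≤ y} => cosCM (y : ℝ))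
      = {φ : C(ℝ, ℂ) | ⇑φ ∈ CosClass ℝ} ∧
    Nonempty ({φ : C(ℝ, ℂ) // ⇑φ ∈ CosClass ℝ} ≃ₜ {y : ℝ // 0 ≤ y}) := by
  refine ⟨cosCM_emb, cosCM_range_eq, ?_⟩
  exact ⟨(Homeomorph.setCongr cosCM_range_eq.symm).trans
    (IsEmbedding.toHomeomorph cosCM_emb).symm⟩
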